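/- Let p ≥ 1 and q, r, s ≤ −1 be integers, and let N = p + 3. Let Q be the Gram matrix of the star-shaped plumbing graph consisting of a central vertex of weight −1, one chain of p − 1 vertices of weight −2 attached to the central vertex, and three additional vertices of weights q, r, and s, each adjacent to the central vertex. If Q admits a lattice embedding into ℤ^N, then there exist integers x_1, x_2, x_3, y_1, y_2, y_3, z_1, z_2, z_3 such that q = −p − x_1² − x_2² − x_3², r = −p − y_1² − y_2² − y_3², s = −p − z_1² − z_2² − z_3², and x_1y_1 + x_2y_2 + x_3y_3 = x_1z_1 + x_2z_2 + x_3z_3 = y_1z_1 + y_2z_2 + y_3z_3 = −p. -/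

import Mathlib

/-- The Gram matrix of a star-shaped plumbing graph: a central vertex of weight
`w0`; for each `i : ι` a chain of `L i` vertices of weight `−2` whose last
vertex is adjacent to the central vertex; and for each `a : κ` an extra vertex
of weight `w a` adjacent to the central vertex. Diagonal entries are the
weights, entries at adjacent pairs of vertices are 1, all other entries are 0. -/
def starGram {ι κ : Type} [DecidableEq ι] [DecidableEq κ]
    (w0 : ℤ) (L : ι → ℕ) (w : κ → ℤ) :
    Matrix (Unit ⊕ ((Σ i : ι, Fin (L i)) ⊕ κ)) (Unit ⊕ ((Σ i : ι, Fin (L i)) ⊕ κ)) ℤ :=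
  fun u v =>
    match u, v with
    | Sum.inl _, Sum.inl _ => w0
    | Sum.inl _, Sum.inr (Sum.inl ⟨i, j⟩) => if (j : ℕ) + 1 = L i then 1 else 0
    | Sum.inl _, Sum.inr (Sum.inr _) => 1
    | Sum.inr (Sum.inl ⟨i, j⟩), Sum.inl _ => if (j : ℕ) + 1 = L i then 1 else 0
    | Sum.inr (Sum.inr _), Sum.inl _ => 1
    | Sum.inr (Sum.inl ⟨i, j⟩), Sum.inr (Sum.inl ⟨i', j'⟩) =>
        if i = i' then
          if (j : ℕ) = (j' : ℕ) then -2
          else if (j : ℕ) + 1 = (j' : ℕ) ∨ (j' : ℕ) + 1 = (j : ℕ) then 1 else 0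
        else 0
    | Sum.inr (Sum.inl _), Sum.inr (Sum.inr _) => 0
    | Sum.inr (Sum.inr _), Sum.inr (Sum.inl _) => 0
    | Sum.inr (Sum.inr a), Sum.inr (Sum.inr b) => if a = b then w a else 0

/-- A lattice embedding of the Gram matrix `Q` into `ℤ^N`: a ℤ-linear map
`φ : ℤ^V → ℤ^N` with `⟨φ(x), φ(y)⟩ = −xᵀQy` for all `x, y`. -/
def IsLatticeEmbedding {V : Type} [Fintype V] (Q : Matrix V V ℤ) (N : ℕ)
    (φ : (V → ℤ) →ₗ[ℤ] (Fin N → ℤ)) : Prop :=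
  ∀ x y : V → ℤ, (∑ m, φ x m * φ y m) = -(∑ a, ∑ b, x a * Q a b * y b)

/-- The support of the `φ`-image of the `i`-th chain: the union of the supports
of `φ` applied to the standard basis vectors corresponding to its vertices. -/
def chainSupport {ι κ : Type} [DecidableEq ι] [DecidableEq κ]
    {L : ι → ℕ} {N : ℕ}
    (φ : ((Unit ⊕ ((Σ i : ι, Fin (L i)) ⊕ κ)) → ℤ) →ₗ[ℤ] (Fin N → ℤ)) (i : ι) :
    Set (Fin N) :=
  ⋃ j : Fin (L i), Function.support (φ (Pi.single (Sum.inr (Sum.inl ⟨i, j⟩)) 1))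

section StarGramAux

def dotZ {N : ℕ} (a b : Fin N → ℤ) : ℤ := ∑ m, a m * b m

lemma dotZ_comm {N : ℕ} (a b : Fin N → ℤ) : dotZ a b = dotZ b a := by
  simp [dotZ, mul_comm]

lemma dotZ_add_left {N : ℕ} (a b c : Fin N → ℤ) :
    dotZ (a + b) c = dotZ a c + dotZ b c := by
  simp [dotZ, add_mul, Finset.sum_add_distrib]

lemma dotZ_add_right {N : ℕ} (a b c : Fin N → ℤ) :
    dotZ a (b + c) = dotZ a b + dotZ a c := by
  rw [dotZ_comm, dotZ_add_left, dotZ_comm b a, dotZ_comm c a]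

lemma dotZ_sum_left {N : ℕ} {ι : Type*} [Fintype ι] (f : ι → Fin N → ℤ) (w : Fin N → ℤ) :
    dotZ (∑ j, f j) w = ∑ j, dotZ (f j) w := by
  simp [dotZ, Finset.sum_mul]
  rw [Finset.sum_comm]

lemma dotZ_smul_left {N : ℕ} (z : ℤ) (a b : Fin N → ℤ) :
    dotZ (z • a) b = z * dotZ a b := by
  simp [dotZ, Finset.mul_sum, mul_assoc]

lemma dotZ_combo {N : ℕ} {ℓ : ℕ} (e : Fin N → ℤ) (c : Fin ℓ → ℤ) (v : Fin ℓ → Fin N → ℤ)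
    (w : Fin N → ℤ) :
    dotZ (e + ∑ j, c j • v j) w = dotZ e w + ∑ j, c j * dotZ (v j) w := by
  rw [dotZ_add_left, dotZ_sum_left]
  congr 1
  exact Finset.sum_congr rfl fun j _ => dotZ_smul_left _ _ _

lemma dot_at {N : ℕ} (a u : Fin N → ℤ) (m : Fin N) (hz : ∀ n, n ≠ m → u n = 0) :
    dotZ a u = a m * u m := by
  rw [dotZ]
  apply Finset.sum_eq_single_of_mem m (Finset.mem_univ m)
  intro b _ hb
  rw [hz b hb, mul_zero]

lemma quad_single {V : Type} [Fintype V] [DecidableEq V] (Q : Matrix V V ℤ) (u v : V) :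
    ∑ a, ∑ b, (Pi.single u (1:ℤ) : V → ℤ) a * Q a b * (Pi.single v (1:ℤ) : V → ℤ) b = Q u v := by
  simp [Pi.single_apply, ite_mul, mul_ite]

lemma unit_vec {N : ℕ} (u : Fin N → ℤ) (h : ∑ m, u m * u m = 1) :
    ∃ m : Fin N, (u m = 1 ∨ u m = -1) ∧ ∀ n, n ≠ m → u n = 0 := by
  have hex : ∃ m, u m ≠ 0 := by
    by_contra hc
    push_neg at hc
    simp [hc] at h
  obtain ⟨m, hm⟩ := hex
  have h1 : 1 ≤ u m * u m := by
    rcases lt_trichotomy (u m) 0 with h' | h' | h'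
    · nlinarith
    · exact absurd h' hm
    · nlinarith
  have hsplit : u m * u m + ∑ n ∈ Finset.univ.erase m, u n * u n = 1 := by
    rw [← h, ← Finset.add_sum_erase _ _ (Finset.mem_univ m)]
  have hz : ∑ n ∈ Finset.univ.erase m, u n * u n = 0 := by
    have hnn : 0 ≤ ∑ n ∈ Finset.univ.erase m, u n * u n :=
      Finset.sum_nonneg fun n _ => mul_self_nonneg _
    omega
  refine ⟨m, ?_, ?_⟩
  · have : u m * u m = 1 := by omega
    rcases lt_trichotomy (u m) 0 with h' | h' | h' <;> [right; exact absurd this (by simp [h']); left] <;> nlinarith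
  · intro n hn
    have := (Finset.sum_eq_zero_iff_of_nonneg (fun n _ => mul_self_nonneg (u n))).mp hz n (by simp [hn])
    nlinarith

lemma chain_ortho {N : ℕ} :
    ∀ (ℓ : ℕ) (e : Fin N → ℤ) (v : Fin ℓ → Fin N → ℤ),
    dotZ e e = 1 →
    (∀ j : Fin ℓ, dotZ e (v j) = if (j:ℕ) + 1 = ℓ then -1 else 0) →
    (∀ j j' : Fin ℓ, dotZ (v j) (v j') =
      if (j:ℕ) = (j':ℕ) then 2
      else if (j:ℕ) + 1 = (j':ℕ) ∨ (j':ℕ) + 1 = (j:ℕ) then -1 else 0) →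
    ∃ u : Fin (ℓ+1) → Fin N → ℤ,
      (∀ k l, dotZ (u k) (u l) = if k = l then 1 else 0) ∧
      (∀ k, ∃ c : Fin ℓ → ℤ, u k = e + ∑ j, c j • v j) := by
  intro ℓ
  induction ℓ with
  | zero =>
    intro e v he _ _
    refine ⟨fun _ => e, fun k l => ?_, fun k => ⟨0, by simp⟩⟩
    have : k = l := Fin.ext (by omega)
    simp [this, he]
  | succ ℓ ih =>
    intro e v he hev hvv
    set last : Fin (ℓ+1) := Fin.last ℓ with hlast
    have hel : dotZ e (v last) = -1 := by
      rw [hev]; simp [hlast]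
    have hll : dotZ (v last) (v last) = 2 := by rw [hvv]; simp
    set e' : Fin N → ℤ := e + v last with he'
    have he'e' : dotZ e' e' = 1 := by
      rw [he', dotZ_add_left, dotZ_add_right, dotZ_add_right, hel, hll,
        dotZ_comm (v last) e, hel, he]
      ring
    have he'v : ∀ j : Fin ℓ, dotZ e' (v j.castSucc) = if (j:ℕ) + 1 = ℓ then -1 else 0 := by
      intro j
      have hj : (j : ℕ) < ℓ := j.isLt
      rw [he', dotZ_add_left, hev, hvv]
      simp only [Fin.coe_castSucc, hlast, Fin.val_last]
      split_ifs <;> omega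
    have hvv' : ∀ j j' : Fin ℓ, dotZ (v j.castSucc) (v j'.castSucc) =
        if (j:ℕ) = (j':ℕ) then 2
        else if (j:ℕ) + 1 = (j':ℕ) ∨ (j':ℕ) + 1 = (j:ℕ) then -1 else 0 := by
      intro j j'
      rw [hvv]; simp
    obtain ⟨u', hu'o, hu'r⟩ := ih e' (fun j => v j.castSucc) he'e' he'v hvv'
    have heu' : ∀ k, dotZ e (u' k) = 0 := by
      intro k
      obtain ⟨c, hc⟩ := hu'r k
      rw [hc, dotZ_comm, dotZ_combo]
      have h1 : dotZ e' e = 0 := by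
        rw [he', dotZ_add_left, dotZ_comm (v last) e, hel, he]; ring
      have h2 : ∀ j : Fin ℓ, dotZ (v j.castSucc) e = 0 := by
        intro j
        have hj : (j : ℕ) < ℓ := j.isLt
        rw [dotZ_comm, hev]
        simp only [Fin.coe_castSucc]
        split_ifs <;> omega
      simp [h1, h2]
    refine ⟨Fin.cons e u', ?_, ?_⟩
    · intro k l
      refine Fin.cases ?_ (fun k' => ?_) k
      · refine Fin.cases ?_ (fun l' => ?_) l
        · simp [he]
        · simp [heu' l', (Fin.succ_ne_zero l').symm]
      · refine Fin.cases ?_ (fun l' => ?_) l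
        · rw [dotZ_comm]
          simp [heu' k', (Fin.succ_ne_zero k').symm, Fin.succ_ne_zero k']
        · rw [Fin.cons_succ, Fin.cons_succ, hu'o k' l']
          simp [Fin.succ_inj]
    · intro k
      refine Fin.cases ?_ (fun k' => ?_) k
      · exact ⟨0, by simp⟩
      · obtain ⟨c, hc⟩ := hu'r k'
        refine ⟨Fin.snoc c 1, ?_⟩
        rw [Fin.cons_succ, hc, he']
        rw [Fin.sum_univ_castSucc]
        simp [Fin.snoc_castSucc, Fin.snoc_last]
        abel

end StarGramAux

lemma final_step {N P : ℕ} (hNP : N = P + 3)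
    (u : Fin P → Fin N → ℤ) (A : Fin 3 → Fin N → ℤ)
    (huo : ∀ k l, dotZ (u k) (u l) = if k = l then 1 else 0)
    (hAu : ∀ (i : Fin 3) k, dotZ (A i) (u k) = -1) :
    ∃ x : Fin 3 → Fin 3 → ℤ, ∀ i i' : Fin 3,
      dotZ (A i) (A i') = (P:ℤ) + (x i 0 * x i' 0 + x i 1 * x i' 1 + x i 2 * x i' 2) := by
  have h1 : ∀ k, ∑ m, u k m * u k m = 1 := fun k => by simpa [dotZ] using huo k k
  choose pos hsgn hzero using fun k => unit_vec (u k) (h1 k)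
  have hs2 : ∀ k, u k (pos k) * u k (pos k) = 1 := fun k => by
    rcases hsgn k with h | h <;> rw [h] <;> norm_num
  have hval : ∀ (a : Fin N → ℤ) k, a (pos k) = dotZ a (u k) * u k (pos k) := by
    intro a k
    rw [dot_at a (u k) (pos k) (hzero k), mul_assoc, hs2 k, mul_one]
  have hinj : Function.Injective pos := by
    intro k l hkl
    by_contra hne
    have h0 : dotZ (u k) (u l) = 0 := by rw [huo]; simp [hne]
    rw [dot_at (u k) (u l) (pos l) (hzero l)] at h0
    rcases hsgn k with h | h <;> rcases hsgn l with h' | h' <;>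
      rw [hkl] at h <;> rw [h, h'] at h0 <;> norm_num at h0
  set S : Finset (Fin N) := Finset.univ.image pos with hS
  have hcardS : S.card = P := by
    rw [hS, Finset.card_image_of_injective _ hinj, Finset.card_univ, Fintype.card_fin]
  set T : Finset (Fin N) := Finset.univ \ S with hT
  have hcardT : T.card = 3 := by
    rw [hT, Finset.card_sdiff_of_subset (Finset.subset_univ S), hcardS, Finset.card_univ,
      Fintype.card_fin]
    omega
  obtain ⟨m1, m2, m3, h12, h13, h23, hTeq⟩ := Finset.card_eq_three.mp hcardT
  have hsplit : ∀ a b : Fin N → ℤ,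
      dotZ a b = (∑ k, dotZ a (u k) * dotZ b (u k))
        + (a m1 * b m1 + a m2 * b m2 + a m3 * b m3) := by
    intro a b
    have h2 : ∑ m ∈ T, a m * b m + ∑ m ∈ S, a m * b m = dotZ a b := by
      rw [dotZ, hT]; exact Finset.sum_sdiff (Finset.subset_univ S)
    have h3 : ∑ m ∈ S, a m * b m = ∑ k, dotZ a (u k) * dotZ b (u k) := by
      rw [hS, Finset.sum_image (fun k _ l _ hh => hinj hh)]
      apply Finset.sum_congr rfl
      intro k _
      rw [hval a k, hval b k, mul_mul_mul_comm, hs2 k, mul_one]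
    have h4 : ∑ m ∈ T, a m * b m = a m1 * b m1 + a m2 * b m2 + a m3 * b m3 := by
      rw [hTeq, Finset.sum_insert (by simp [h12, h13]),
        Finset.sum_insert (by simp [h23]), Finset.sum_singleton]
      ring
    linarith
  refine ⟨fun i => ![A i m1, A i m2, A i m3], ?_⟩
  intro i i'
  rw [hsplit (A i) (A i')]
  have hsum : ∑ k, dotZ (A i) (u k) * dotZ (A i') (u k) = (P:ℤ) := by
    simp [hAu]
  rw [hsum]
  simp [Matrix.cons_val_zero, Matrix.cons_val_one, Matrix.head_cons]

/-- If the plumbing `X(p, q, r, s)` with `p ≥ 1` and `q, r, s ≤ −1` (central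
vertex of weight `−1`, one chain of length `p−1`, and three vertices of weights
`q`, `r`, `s`) admits a lattice embedding into `ℤ^(p+3)`, then
`q = −p − x₁² − x₂² − x₃²`, `r = −p − y₁² − y₂² − y₃²`,
`s = −p − z₁² − z₂² − z₃²`, and the pairwise dot products of `(x₁,x₂,x₃)`,
`(y₁,y₂,y₃)`, `(z₁,z₂,z₃)` all equal `−p`. -/
theorem stmt_19 (p : ℕ) (hp : 1 ≤ p) (q r s : ℤ)
    (hq : q ≤ -1) (hr : r ≤ -1) (hs : s ≤ -1)
    (N : ℕ) (hN : N = p + 3)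
    (h : ∃ φ : ((Unit ⊕ ((Σ _ : Unit, Fin (p - 1)) ⊕ Fin 3)) → ℤ) →ₗ[ℤ]
        (Fin N → ℤ),
      IsLatticeEmbedding (starGram (-1) (fun _ : Unit => p - 1) ![q, r, s]) N φ) :
    ∃ x1 x2 x3 y1 y2 y3 z1 z2 z3 : ℤ,
      q = -(p : ℤ) - x1 ^ 2 - x2 ^ 2 - x3 ^ 2 ∧
      r = -(p : ℤ) - y1 ^ 2 - y2 ^ 2 - y3 ^ 2 ∧
      s = -(p : ℤ) - z1 ^ 2 - z2 ^ 2 - z3 ^ 2 ∧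
      x1 * y1 + x2 * y2 + x3 * y3 = -(p : ℤ) ∧
      x1 * z1 + x2 * z2 + x3 * z3 = -(p : ℤ) ∧
      y1 * z1 + y2 * z2 + y3 * z3 = -(p : ℤ) := by
  obtain ⟨φ, hφ⟩ := h
  have base : ∀ u v : (Unit ⊕ ((Σ _ : Unit, Fin (p - 1)) ⊕ Fin 3)),
      dotZ (φ (Pi.single u (1:ℤ))) (φ (Pi.single v (1:ℤ))) =
        -(starGram (-1) (fun _ : Unit => p - 1) ![q, r, s] u v) := by
    intro u v
    have hb := hφ (Pi.single u (1:ℤ)) (Pi.single v (1:ℤ))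
    rw [quad_single] at hb
    exact hb
  have hEE : dotZ (φ (Pi.single (Sum.inl ()) (1:ℤ)))
      (φ (Pi.single (Sum.inl ()) (1:ℤ))) = 1 := by
    rw [base]
    norm_num [show starGram (-1 : ℤ) (fun _ : Unit => p - 1) ![q, r, s]
      (Sum.inl ()) (Sum.inl ()) = -1 from rfl]
  have hEV : ∀ j : Fin (p-1), dotZ (φ (Pi.single (Sum.inl ()) (1:ℤ)))
      (φ (Pi.single (Sum.inr (Sum.inl ⟨(), j⟩)) (1:ℤ))) =
      if (j:ℕ) + 1 = p - 1 then -1 else 0 := by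
    intro j
    rw [base, show starGram (-1 : ℤ) (fun _ : Unit => p - 1) ![q, r, s]
      (Sum.inl ()) (Sum.inr (Sum.inl ⟨(), j⟩)) =
      if (j:ℕ) + 1 = p - 1 then 1 else 0 from rfl]
    split_ifs <;> norm_num
  have hVV : ∀ j j' : Fin (p-1),
      dotZ (φ (Pi.single (Sum.inr (Sum.inl ⟨(), j⟩)) (1:ℤ)))
        (φ (Pi.single (Sum.inr (Sum.inl ⟨(), j'⟩)) (1:ℤ))) =
      if (j:ℕ) = (j':ℕ) then 2
      else if (j:ℕ) + 1 = (j':ℕ) ∨ (j':ℕ) + 1 = (j:ℕ) then -1 else 0 := by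
    intro j j'
    rw [base, show starGram (-1 : ℤ) (fun _ : Unit => p - 1) ![q, r, s]
      (Sum.inr (Sum.inl ⟨(), j⟩)) (Sum.inr (Sum.inl ⟨(), j'⟩)) =
      if (j:ℕ) = (j':ℕ) then -2
      else if (j:ℕ) + 1 = (j':ℕ) ∨ (j':ℕ) + 1 = (j:ℕ) then 1 else 0 from rfl]
    split_ifs <;> norm_num
  have hEA : ∀ i : Fin 3, dotZ (φ (Pi.single (Sum.inl ()) (1:ℤ)))
      (φ (Pi.single (Sum.inr (Sum.inr i)) (1:ℤ))) = -1 := by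
    intro i
    rw [base, show starGram (-1 : ℤ) (fun _ : Unit => p - 1) ![q, r, s]
      (Sum.inl ()) (Sum.inr (Sum.inr i)) = 1 from rfl]
  have hVA : ∀ (i : Fin 3) (j : Fin (p-1)),
      dotZ (φ (Pi.single (Sum.inr (Sum.inl ⟨(), j⟩)) (1:ℤ)))
        (φ (Pi.single (Sum.inr (Sum.inr i)) (1:ℤ))) = 0 := by
    intro i j
    rw [base, show starGram (-1 : ℤ) (fun _ : Unit => p - 1) ![q, r, s]
      (Sum.inr (Sum.inl ⟨(), j⟩)) (Sum.inr (Sum.inr i)) = 0 from rfl]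
    norm_num
  have hAA : ∀ i i' : Fin 3,
      dotZ (φ (Pi.single (Sum.inr (Sum.inr i)) (1:ℤ)))
        (φ (Pi.single (Sum.inr (Sum.inr i')) (1:ℤ))) =
      if i = i' then -(![q, r, s] i) else 0 := by
    intro i i'
    rw [base, show starGram (-1 : ℤ) (fun _ : Unit => p - 1) ![q, r, s]
      (Sum.inr (Sum.inr i)) (Sum.inr (Sum.inr i')) =
      if i = i' then ![q, r, s] i else 0 from rfl]
    split_ifs <;> norm_num
  obtain ⟨u, huo, hur⟩ := chain_ortho (p-1)
    (φ (Pi.single (Sum.inl ()) (1:ℤ)))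
    (fun j => φ (Pi.single (Sum.inr (Sum.inl ⟨(), j⟩)) (1:ℤ)))
    hEE hEV hVV
  have hAu : ∀ (i : Fin 3) (k : Fin (p-1+1)),
      dotZ (φ (Pi.single (Sum.inr (Sum.inr i)) (1:ℤ))) (u k) = -1 := by
    intro i k
    obtain ⟨c, hc⟩ := hur k
    rw [dotZ_comm, hc, dotZ_combo, hEA i]
    simp [hVA i]
  obtain ⟨x, hx⟩ := final_step (show N = (p-1+1) + 3 by omega) u
    (fun i => φ (Pi.single (Sum.inr (Sum.inr i)) (1:ℤ))) huo hAu
  have key : ∀ i i' : Fin 3,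
      (if i = i' then -(![q, r, s] i) else 0) =
      ((p-1+1 : ℕ) : ℤ) + (x i 0 * x i' 0 + x i 1 * x i' 1 + x i 2 * x i' 2) := by
    intro i i'
    rw [← hAA i i']
    exact hx i i'
  have hcast : ((p-1+1 : ℕ) : ℤ) = (p : ℤ) := by
    have : p - 1 + 1 = p := by omega
    rw [this]
  simp only [hcast] at key
  have k00 := key 0 0
  have k11 := key 1 1
  have k22 := key 2 2
  have k01 := key 0 1
  have k02 := key 0 2
  have k12 := key 1 2
  norm_num [Matrix.cons_val_zero, Matrix.cons_val_one, Matrix.head_cons,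
    show (0:Fin 3) ≠ 2 from by decide, show (1:Fin 3) ≠ 2 from by decide]
    at k00 k11 k22 k01 k02 k12
  refine ⟨x 0 0, x 0 1, x 0 2, x 1 0, x 1 1, x 1 2, x 2 0, x 2 1, x 2 2,
    ?_, ?_, ?_, ?_, ?_, ?_⟩
  · linear_combination -k00
  · linear_combination -k11
  · have h2 : (![q, r, s] 2) = s := rfl
    linear_combination -k22 - h2
  · linear_combination -k01
  · linear_combination -k02
  · linear_combination -k12
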